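/- For integers L ≥ 2t ≥ 0, the polynomial q^(t^2) * qbinom(L-t, t) in q is the generating function for partitions into exactly t parts with difference at least 2 between consecutive parts, each part being less than L. -/

import Mathlib

open Finset

/-- The formal variable `q` in the field of rational functions over `ℚ`. -/
noncomputable def q : RatFunc ℚ := RatFunc.X

/-- Gaussian binomial coefficient `qbinom(N, K)` in the variable `p`:
`(p^{K+1}; p)_{N-K} / (p; p)_{N-K}` when `0 ≤ K ≤ N`, and `0` otherwise. -/
noncomputable def qbin (p : RatFunc ℚ) (N K : ℤ) : RatFunc ℚ :=
  if 0 ≤ K ∧ K ≤ N then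
    (∏ j ∈ Finset.range (N - K).toNat, (1 - p ^ (K + 1 + (j : ℤ)))) /
    (∏ j ∈ Finset.range (N - K).toNat, (1 - p ^ ((j : ℤ) + 1)))
  else 0

lemma one_sub_q_pow_ne_zero {k : ℕ} (hk : 1 ≤ k) : (1 : RatFunc ℚ) - q ^ k ≠ 0 := by
  rw [sub_ne_zero]
  intro hcon
  have h1 : (q : RatFunc ℚ) ^ k = algebraMap (Polynomial ℚ) (RatFunc ℚ) (Polynomial.X ^ k) := by
    rw [map_pow, RatFunc.algebraMap_X, q]
  have h2 : (1 : RatFunc ℚ) = algebraMap (Polynomial ℚ) (RatFunc ℚ) 1 := by simp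
  rw [h1, h2] at hcon
  have := RatFunc.algebraMap_injective ℚ hcon.symm
  have := congrArg Polynomial.natDegree this
  simp [Polynomial.natDegree_X_pow] at this
  omega

lemma denom_ne_zero (m : ℕ) : (∏ j ∈ Finset.range m, ((1:RatFunc ℚ) - q ^ (j + 1))) ≠ 0 := by
  apply Finset.prod_ne_zero_iff.mpr
  intro j _
  exact one_sub_q_pow_ne_zero (by omega)

lemma qbin_eq (m t : ℕ) :
    qbin q ((m : ℤ) + t) t =
      (∏ j ∈ Finset.range m, (1 - q ^ (t + 1 + j))) /
      (∏ j ∈ Finset.range m, (1 - q ^ (j + 1))) := by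
  unfold qbin
  rw [if_pos ⟨Int.ofNat_nonneg t, by omega⟩]
  have h1 : ((m : ℤ) + t - t).toNat = m := by omega
  rw [h1]
  have e1 : ∀ j : ℕ, (q : RatFunc ℚ) ^ ((t:ℤ) + 1 + (j:ℤ)) = q ^ (t + 1 + j) := fun j => by
    rw [← zpow_natCast q (t+1+j)]; norm_cast
  have e2 : ∀ j : ℕ, (q : RatFunc ℚ) ^ ((j:ℤ) + 1) = q ^ (j + 1) := fun j => by
    rw [← zpow_natCast q (j+1)]; norm_cast
  simp only [e1, e2]

lemma qbin_t_zero (m : ℕ) : qbin q ((m : ℤ)) 0 = 1 := by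
  have h := qbin_eq m 0
  norm_num at h
  rw [h]
  rw [show (∏ j ∈ Finset.range m, ((1:RatFunc ℚ) - q ^ (0 + 1 + j)))
      = ∏ j ∈ Finset.range m, ((1:RatFunc ℚ) - q ^ (j + 1)) from
    Finset.prod_congr rfl fun j _ => by rw [show 0+1+j = j+1 from by omega]]
  exact div_self (denom_ne_zero m)

lemma qbin_m_zero (t : ℕ) : qbin q ((t : ℤ)) t = 1 := by
  have h := qbin_eq 0 t
  push_cast at h
  simpa using h

lemma aux_pascal (A D a b c : RatFunc ℚ) (hD : D ≠ 0) (hc : (1:RatFunc ℚ) - c ≠ 0)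
    (hkey : (1:RatFunc ℚ) - a = 1 - c + c * (1 - b)) :
    A * (1 - a) / (D * (1 - c)) = A / D + c * (A * (1 - b) / (D * (1 - c))) := by
  rw [hkey]; field_simp

lemma qbin_pascal (m t : ℕ) :
    qbin q (((m+1 : ℕ) : ℤ) + ((t+1 : ℕ) : ℤ)) ((t+1 : ℕ) : ℤ) =
      qbin q ((m : ℤ) + ((t+1 : ℕ) : ℤ)) ((t+1 : ℕ) : ℤ)
      + q ^ (m+1) * qbin q (((m+1 : ℕ) : ℤ) + (t : ℤ)) (t : ℤ) := by
  have hD := denom_ne_zero m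
  have hu : (1:RatFunc ℚ) - q^(m+1) ≠ 0 := one_sub_q_pow_ne_zero (by omega)
  rw [qbin_eq (m+1) (t+1), qbin_eq m (t+1), qbin_eq (m+1) t]
  have hC : ∏ j ∈ Finset.range (m+1), ((1:RatFunc ℚ) - q^(t+1+j))
      = (∏ j ∈ Finset.range m, ((1:RatFunc ℚ) - q^(t+1+1+j))) * (1 - q^(t+1)) := by
    rw [Finset.prod_range_succ']
    congr 1
    exact Finset.prod_congr rfl fun j _ => by rw [show t+1+(j+1) = t+1+1+j from by omega]
  rw [hC, Finset.prod_range_succ (fun j => (1:RatFunc ℚ) - q ^ (t+1+1+j)),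
      Finset.prod_range_succ (fun j => (1:RatFunc ℚ) - q ^ (j+1))]
  exact aux_pascal _ _ _ _ _ hD hu (by ring)

noncomputable def B (t m : ℕ) : RatFunc ℚ :=
  ∑ g ∈ Finset.univ.filter (fun g : Fin t → Fin (m+1) => Monotone g),
    q ^ (∑ i, (g i : ℕ))

lemma B_zero (m : ℕ) : B 0 m = 1 := by
  have h1 : ∀ g : Fin 0 → Fin (m+1), Monotone g := fun g i => i.elim0
  rw [B, Finset.filter_true_of_mem (fun g _ => h1 g)]
  simp

lemma B_t_zero (t : ℕ) : B t 0 = 1 := by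
  have h1 : ∀ g : Fin t → Fin 1, Monotone g := fun g a b _ =>
    le_of_eq (Subsingleton.elim (g a) (g b))
  rw [B, Finset.filter_true_of_mem (fun g _ => h1 g)]
  have h2 : ∀ g : Fin t → Fin 1, (∑ i, (g i : ℕ)) = 0 := fun g =>
    Finset.sum_eq_zero fun i _ => by have := (g i).isLt; omega
  simp only [h2, pow_zero]
  simp

lemma B_rec (t m : ℕ) : B (t+1) (m+1) = B (t+1) m + q^(m+1) * B t (m+1) := by
  rw [B]
  rw [← Finset.sum_filter_add_sum_filter_not
    (Finset.univ.filter (fun g : Fin (t+1) → Fin (m+2) => Monotone g))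
    (fun g => (g (Fin.last t) : ℕ) ≤ m)]
  rw [Finset.filter_filter, Finset.filter_filter]
  congr 1
  · -- values all ≤ m : bijection with Fin (t+1) → Fin (m+1)
    rw [B]
    apply Finset.sum_nbij' (i := fun g (i : Fin (t+1)) => (⟨min (g i : ℕ) m, by omega⟩ : Fin (m+1)))
      (j := fun g (i : Fin (t+1)) => (Fin.castSucc (g i) : Fin (m+2)))
    · intro g hg
      rw [Finset.mem_filter] at hg ⊢
      obtain ⟨-, hmono, hle⟩ := hg
      refine ⟨Finset.mem_univ _, fun a b hab => ?_⟩
      have h1 : (g a : ℕ) ≤ (g b : ℕ) := hmono hab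
      simp only [Fin.mk_le_mk]
      omega
    · intro g hg
      rw [Finset.mem_filter] at hg ⊢
      obtain ⟨-, hmono⟩ := hg
      refine ⟨Finset.mem_univ _, ⟨fun a b hab => ?_, ?_⟩⟩
      · simp only [Fin.le_def, Fin.coe_castSucc]
        exact hmono hab
      · simp only [Fin.coe_castSucc]
        exact Nat.lt_succ_iff.mp (g (Fin.last t)).isLt
    · intro g hg
      rw [Finset.mem_filter] at hg
      obtain ⟨-, hmono, hle⟩ := hg
      funext i
      apply Fin.ext
      have h2 : (g i : ℕ) ≤ m := le_trans (hmono (Fin.le_last i)) hle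
      simp [h2]
    · intro g hg
      funext i
      apply Fin.ext
      have : (g i : ℕ) ≤ m := Nat.lt_succ_iff.mp (g i).isLt
      simp [this]
    · intro g hg
      rw [Finset.mem_filter] at hg
      obtain ⟨-, hmono, hle⟩ := hg
      congr 1
      apply Finset.sum_congr rfl
      intro i _
      have h2 : (g i : ℕ) ≤ m := le_trans (hmono (Fin.le_last i)) hle
      simp [h2]
  · -- g last = m+1 : bijection with Fin t → Fin (m+2)
    rw [B, Finset.mul_sum]
    apply Finset.sum_nbij' (i := fun (g : Fin (t+1) → Fin (m+2)) (i : Fin t) => g (Fin.castSucc i))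
      (j := fun (g : Fin t → Fin (m+2)) => Fin.snoc g (Fin.last (m+1)))
    · intro g hg
      rw [Finset.mem_filter] at hg ⊢
      obtain ⟨-, hmono, -⟩ := hg
      exact ⟨Finset.mem_univ _, fun a b hab => hmono (Fin.castSucc_le_castSucc_iff.mpr hab)⟩
    · intro g hg
      rw [Finset.mem_filter] at hg ⊢
      obtain ⟨-, hmono⟩ := hg
      refine ⟨Finset.mem_univ _, ?_, ?_⟩
      · intro a b hab
        rcases eq_or_lt_of_le (Fin.le_last b) with hb | hb
        · rw [hb, Fin.snoc_last]; exact Fin.le_last _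
        · have hb' : (b:ℕ) < t := by simpa [Fin.lt_def] using hb
          have ha' : (a:ℕ) < t := lt_of_le_of_lt hab hb'
          have ea : a = Fin.castSucc (⟨(a:ℕ), ha'⟩ : Fin t) := Fin.ext rfl
          have eb : b = Fin.castSucc (⟨(b:ℕ), hb'⟩ : Fin t) := Fin.ext rfl
          rw [ea, eb, Fin.snoc_castSucc, Fin.snoc_castSucc]
          exact hmono hab
      · rw [Fin.snoc_last]
        simp
    · intro g hg
      rw [Finset.mem_filter] at hg
      obtain ⟨-, hmono, hlast⟩ := hg
      funext i
      refine Fin.lastCases ?_ ?_ i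
      · rw [Fin.snoc_last]
        apply Fin.ext
        have := (g (Fin.last t)).isLt
        simp only [Fin.val_last]
        omega
      · intro j
        rw [Fin.snoc_castSucc]
    · intro g hg
      funext i
      exact Fin.snoc_castSucc _ _ _
    · intro g hg
      rw [Finset.mem_filter] at hg
      obtain ⟨-, hmono, hlast⟩ := hg
      rw [← pow_add]
      congr 1
      have hsum := Fin.sum_univ_castSucc (fun i : Fin (t+1) => (g i : ℕ))
      have hl : (g (Fin.last t) : ℕ) = m + 1 := by
        have := (g (Fin.last t)).isLt; omega
      rw [hsum, hl]
      ring

lemma qbin_eq_B (t m : ℕ) : qbin q ((m : ℤ) + (t : ℤ)) t = B t m := by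
  induction t generalizing m with
  | zero =>
    rw [B_zero]
    have := qbin_t_zero m
    simpa using this
  | succ t iht =>
    induction m with
    | zero =>
      rw [B_t_zero]
      have := qbin_m_zero (t+1)
      push_cast at this ⊢
      simpa using this
    | succ m ihm =>
      have hp := qbin_pascal m t
      push_cast at hp ⊢
      rw [hp, B_rec]
      have h1 : qbin q ((m:ℤ) + ((t:ℤ)+1)) ((t:ℤ)+1) = B (t+1) m := by
        have h := ihm; push_cast at h; exact h
      have h2 : qbin q ((m:ℤ)+1+(t:ℤ)) (t:ℤ) = B t (m+1) := by
        have h := iht (m+1); push_cast at h; exact h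
      rw [h1, h2]

lemma sum_odd (t : ℕ) : (∑ i : Fin t, (2*(i:ℕ)+1)) = t^2 := by
  induction t with
  | zero => simp
  | succ t ih =>
    rw [Fin.sum_univ_castSucc]
    simp only [Fin.coe_castSucc, Fin.val_last]
    rw [ih]; ring

lemma chain {L t : ℕ} (f : Fin t → Fin L)
    (h2 : ∀ i j : Fin t, (i:ℕ)+1 = (j:ℕ) → (f i:ℕ)+2 ≤ (f j:ℕ)) :
    ∀ d : ℕ, ∀ i j : Fin t, (j:ℕ) = (i:ℕ) + d → (f i:ℕ) + 2*d ≤ (f j:ℕ) := by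
  intro d
  induction d with
  | zero =>
    intro i j hij
    have : i = j := Fin.ext (by omega)
    subst this; omega
  | succ d ih =>
    intro i j hij
    have hlt : (i:ℕ) + d < t := by have := j.isLt; omega
    have h1 := ih i ⟨(i:ℕ)+d, hlt⟩ rfl
    have h3 := h2 ⟨(i:ℕ)+d, hlt⟩ j (by simp only [Fin.val_mk]; omega)
    omega


/-- For `L ≥ 2t ≥ 0`, `q^(t²) · qbinom(L-t, t)` is the generating function for
partitions into exactly `t` parts with difference at least 2 between consecutive
parts, each part positive and less than `L`.  Partitions are encoded as
increasing tuples `f : Fin t → Fin L` of parts. -/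
theorem stmt0 (L t : ℕ) (h : 2 * t ≤ L) :
    q ^ (t ^ 2) * qbin q ((L : ℤ) - t) t =
    ∑ f ∈ Finset.univ.filter (fun f : Fin t → Fin L =>
        (∀ i, 1 ≤ (f i : ℕ)) ∧
        (∀ i j : Fin t, (i : ℕ) + 1 = (j : ℕ) → (f i : ℕ) + 2 ≤ (f j : ℕ))),
      q ^ (∑ i, (f i : ℕ)) := by
  have hcast : (L:ℤ) - t = ((L - 2*t : ℕ) : ℤ) + (t:ℤ) := by omega
  rw [hcast, qbin_eq_B, B, Finset.mul_sum]
  apply Finset.sum_nbij'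
    (i := fun (g : Fin t → Fin (L-2*t+1)) (i : Fin t) =>
      (⟨min ((g i : ℕ) + 2*(i:ℕ) + 1) (L-1),
        Nat.lt_of_le_of_lt (Nat.min_le_right _ _) (by have := i.isLt; omega)⟩ : Fin L))
    (j := fun (f : Fin t → Fin L) (i : Fin t) =>
      (⟨min ((f i : ℕ) - (2*(i:ℕ)+1)) (L-2*t),
        Nat.lt_succ_of_le (Nat.min_le_right _ _)⟩ : Fin (L-2*t+1)))
  · -- hi
    intro g hg
    rw [Finset.mem_filter] at hg ⊢
    obtain ⟨-, hmono⟩ := hg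
    refine ⟨Finset.mem_univ _, fun i => ?_, fun i j hij => ?_⟩
    · simp only [Fin.val_mk]
      have := i.isLt
      omega
    · simp only [Fin.val_mk]
      have hmo : (g i : ℕ) ≤ (g j : ℕ) := hmono (show i ≤ j by rw [Fin.le_def]; omega)
      have h1 := (g i).isLt
      have h2 := (g j).isLt
      have h3 := j.isLt
      omega
  · -- hj
    intro f hf
    rw [Finset.mem_filter] at hf ⊢
    obtain ⟨-, hpos, hstep⟩ := hf
    refine ⟨Finset.mem_univ _, fun a b hab => ?_⟩
    rw [Fin.le_def] at hab ⊢
    simp only [Fin.val_mk]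
    have hc := chain f hstep ((b:ℕ)-(a:ℕ)) a b (by omega)
    omega
  · -- left_inv
    intro g hg
    funext i
    apply Fin.ext
    simp only [Fin.val_mk]
    have h1 := (g i).isLt
    have h2 := i.isLt
    omega
  · -- right_inv
    intro f hf
    rw [Finset.mem_filter] at hf
    obtain ⟨-, hpos, hstep⟩ := hf
    funext i
    apply Fin.ext
    simp only [Fin.val_mk]
    have h0 : 0 < t := i.pos
    have hlow := chain f hstep (i:ℕ) ⟨0, h0⟩ i (by simp only [Fin.val_mk]; omega)
    have hp0 := hpos ⟨0, h0⟩
    have hup := chain f hstep ((t-1)-(i:ℕ)) i ⟨t-1, by omega⟩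
      (by simp only [Fin.val_mk]; omega)
    have hlast := (f ⟨t-1, by omega⟩).isLt
    have hi := i.isLt
    omega
  · -- h
    intro g hg
    rw [Finset.mem_filter] at hg
    obtain ⟨-, hmono⟩ := hg
    rw [← pow_add]
    congr 1
    simp only [Fin.val_mk]
    have hmin : ∀ i : Fin t, min ((g i:ℕ)+2*(i:ℕ)+1) (L-1) = (g i:ℕ)+2*(i:ℕ)+1 :=
      fun i => by have := (g i).isLt; have := i.isLt; omega
    simp only [hmin]
    have hsplit : (∑ i : Fin t, ((g i:ℕ) + 2*(i:ℕ) + 1))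
        = (∑ i, (g i:ℕ)) + (∑ i : Fin t, (2*(i:ℕ)+1)) := by
      rw [← Finset.sum_add_distrib]
      exact Finset.sum_congr rfl fun i _ => by ring
    rw [hsplit, sum_odd]
    ring
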